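/- Invariance of the Gaussian synergy criterion under index permutation: for a 3×3 positive definite correlation matrix, |ρ12| < |ρ_{12|3}| holds if and only if |ρ13| < |ρ_{13|2}| holds, if and only if |ρ23| < |ρ_{23|1}| holds (where ρ_{ij|k} denotes the partial correlation of i and j given k). -/

import Mathlib

open Real

noncomputable def corrMat (ρ12 ρ13 ρ23 : ℝ) : Matrix (Fin 3) (Fin 3) ℝ :=
  !![1, ρ12, ρ13; ρ12, 1, ρ23; ρ13, ρ23, 1]

noncomputable def gaussEnt (ρ12 ρ13 ρ23 : ℝ) (A : Finset (Fin 3)) : ℝ :=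
  (1 / 2) * Real.log
    (((corrMat ρ12 ρ13 ρ23).submatrix
        (fun i : A => (i : Fin 3)) (fun j : A => (j : Fin 3))).det)

noncomputable def delta123 (ρ12 ρ13 ρ23 : ℝ) : ℝ :=
  gaussEnt ρ12 ρ13 ρ23 {0, 1, 2}
    - gaussEnt ρ12 ρ13 ρ23 {0, 1} - gaussEnt ρ12 ρ13 ρ23 {0, 2}
    - gaussEnt ρ12 ρ13 ρ23 {1, 2}
    + gaussEnt ρ12 ρ13 ρ23 {0} + gaussEnt ρ12 ρ13 ρ23 {1}
    + gaussEnt ρ12 ρ13 ρ23 {2}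

noncomputable def partialCorr (ρ12 ρ13 ρ23 : ℝ) : ℝ :=
  (ρ12 - ρ13 * ρ23) / Real.sqrt ((1 - ρ13 ^ 2) * (1 - ρ23 ^ 2))

lemma key_abs_lt (x y s : ℝ) (hs : 0 < s) :
    |x| < |y / Real.sqrt s| ↔ x ^ 2 * s < y ^ 2 := by
  have hs' : 0 < Real.sqrt s := Real.sqrt_pos.mpr hs
  rw [abs_div, abs_of_pos hs', lt_div_iff₀ hs']
  constructor
  · intro h
    have h2 := pow_lt_pow_left₀ h (by positivity) two_ne_zero
    calc x ^ 2 * s = (|x| * Real.sqrt s) ^ 2 := by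
          rw [mul_pow, sq_abs, Real.sq_sqrt hs.le]
      _ < |y| ^ 2 := h2
      _ = y ^ 2 := sq_abs y
  · intro h
    have h2 : (|x| * Real.sqrt s) ^ 2 < |y| ^ 2 := by
      rw [mul_pow, sq_abs, Real.sq_sqrt hs.le, sq_abs]; exact h
    exact lt_of_pow_lt_pow_left₀ 2 (abs_nonneg y) h2

theorem stmt_13 (ρ12 ρ13 ρ23 : ℝ) (hpd : (corrMat ρ12 ρ13 ρ23).PosDef) :
    (|ρ12| < |partialCorr ρ12 ρ13 ρ23| ↔ |ρ13| < |partialCorr ρ13 ρ12 ρ23|)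
      ∧ (|ρ13| < |partialCorr ρ13 ρ12 ρ23| ↔ |ρ23| < |partialCorr ρ23 ρ12 ρ13|) := by
  have ha : 0 < 1 - ρ12 ^ 2 := by
    have h := hpd.dotProduct_mulVec_pos (x := ![ρ12, -1, 0]) (fun h => by simpa using congrFun h 1)
    simp [corrMat, Matrix.mulVec, dotProduct, Fin.sum_univ_three] at h
    nlinarith [h]
  have hb : 0 < 1 - ρ13 ^ 2 := by
    have h := hpd.dotProduct_mulVec_pos (x := ![ρ13, 0, -1]) (fun h => by simpa using congrFun h 2)
    simp [corrMat, Matrix.mulVec, dotProduct, Fin.sum_univ_three] at h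
    nlinarith [h]
  have hc : 0 < 1 - ρ23 ^ 2 := by
    have h := hpd.dotProduct_mulVec_pos (x := ![0, ρ23, -1]) (fun h => by simpa using congrFun h 2)
    simp [corrMat, Matrix.mulVec, dotProduct, Fin.sum_univ_three] at h
    nlinarith [h]
  have hd : 0 < 1 - ρ12 ^ 2 - ρ13 ^ 2 - ρ23 ^ 2 + 2 * ρ12 * ρ13 * ρ23 := by
    have h := hpd.det_pos
    rw [corrMat, Matrix.det_fin_three] at h
    simp at h
    nlinarith [h]
  have h1 : (|ρ12| < |partialCorr ρ12 ρ13 ρ23|) ↔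
      (1 - ρ12 ^ 2 - ρ13 ^ 2 - ρ23 ^ 2 + 2 * ρ12 * ρ13 * ρ23
        < (1 - ρ12 ^ 2) * (1 - ρ13 ^ 2) * (1 - ρ23 ^ 2)) := by
    rw [partialCorr, key_abs_lt _ _ _ (mul_pos hb hc)]
    constructor <;> intro h <;> nlinarith [h]
  have h2 : (|ρ13| < |partialCorr ρ13 ρ12 ρ23|) ↔
      (1 - ρ12 ^ 2 - ρ13 ^ 2 - ρ23 ^ 2 + 2 * ρ12 * ρ13 * ρ23
        < (1 - ρ12 ^ 2) * (1 - ρ13 ^ 2) * (1 - ρ23 ^ 2)) := by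
    rw [partialCorr, key_abs_lt _ _ _ (mul_pos ha hc)]
    constructor <;> intro h <;> nlinarith [h]
  have h3 : (|ρ23| < |partialCorr ρ23 ρ12 ρ13|) ↔
      (1 - ρ12 ^ 2 - ρ13 ^ 2 - ρ23 ^ 2 + 2 * ρ12 * ρ13 * ρ23
        < (1 - ρ12 ^ 2) * (1 - ρ13 ^ 2) * (1 - ρ23 ^ 2)) := by
    rw [partialCorr, key_abs_lt _ _ _ (mul_pos ha hb)]
    constructor <;> intro h <;> nlinarith [h]
  exact ⟨h1.trans h2.symm, h2.trans h3.symm⟩
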